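/- Assume Y = K acts on itself by the regular representation and H ≤ Perm(X) is transitive. Then the normalizer N of W = H ≀ K in Perm(Z) satisfies N = (Γ(Aut(K)) · Λ(K)) · (N ∩ S_K(Z)), i.e., every element of N is a product of an element of Γ(Aut(K)), an element of Λ(K), and an element of N ∩ S_K(Z). -/

import Mathlib

open Equiv

/-- The block `X_y = X × {y}` inside `Z = X × Y`. -/
def block (X Y : Type*) (y : Y) : Set (X × Y) := {p | p.2 = y}

/-- The subgroup `S_Y(Z)` of all permutations of `Z = X × Y` stabilizing every block `X_y`. -/
def blockStab (X Y : Type*) : Subgroup (Perm (X × Y)) where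
  carrier := {f | ∀ y : Y, f '' block X Y y = block X Y y}
  one_mem' := by intro y; simp
  mul_mem' := by
    intro f g hf hg y
    have hfg : ⇑(f * g) = ⇑f ∘ ⇑g := rfl
    rw [hfg, Set.image_comp, hg y, hf y]
  inv_mem' := by
    intro f hf y
    have h1 : ⇑f '' block X Y y = block X Y y := hf y
    calc ⇑f⁻¹ '' block X Y y = ⇑f⁻¹ '' (⇑f '' block X Y y) := by rw [h1]
      _ = block X Y y := by
          rw [← Set.image_comp]
          have h2 : ⇑f⁻¹ ∘ ⇑f = id := by funext p; simp
          rw [h2, Set.image_id]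

/-- For `h` a permutation of `X` and `y ∈ Y`, the permutation `h_y` of `Z = X × Y`
acting as `h` on the block `X_y` and fixing everything else. -/
noncomputable def fiberPerm (X Y : Type*) (h : Perm X) (y : Y) : Perm (X × Y) :=
  letI := Classical.decEq Y
  { toFun := fun p => if p.2 = y then (h p.1, p.2) else p
    invFun := fun p => if p.2 = y then (h.symm p.1, p.2) else p
    left_inv := fun p => by
      obtain ⟨x, y'⟩ := p
      by_cases hp : y' = y <;> simp [hp]
    right_inv := fun p => by
      obtain ⟨x, y'⟩ := p
      by_cases hp : y' = y <;> simp [hp] }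

lemma fiberPerm_apply_eq (X Y : Type*) (h : Perm X) (y : Y) (x : X) :
    fiberPerm X Y h y (x, y) = (h x, y) := by
  simp [fiberPerm]

lemma fiberPerm_apply_ne (X Y : Type*) (h : Perm X) (y : Y) (p : X × Y) (hp : p.2 ≠ y) :
    fiberPerm X Y h y p = p := by
  simp [fiberPerm, hp]

/-- The homomorphism `h ↦ h_y`. -/
noncomputable def fiberHom (X Y : Type*) (y : Y) : Perm X →* Perm (X × Y) where
  toFun h := fiberPerm X Y h y
  map_one' := by
    refine Equiv.ext fun p => ?_
    by_cases hp : p.2 = y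
    · obtain ⟨x, y'⟩ := p; subst hp; simp [fiberPerm_apply_eq]
    · simp [fiberPerm_apply_ne _ _ _ _ _ hp]
  map_mul' := by
    intro h1 h2
    refine Equiv.ext fun p => ?_
    by_cases hp : p.2 = y
    · obtain ⟨x, y'⟩ := p
      subst hp
      simp [Perm.mul_apply, fiberPerm_apply_eq]
    · simp [Perm.mul_apply, fiberPerm_apply_ne _ _ _ _ _ hp]

/-- The embedding `Λ` of permutations of `Y` into permutations of `Z = X × Y`,
`Λ(k)(x,y) = (x, k(y))`. -/
def lamHom (X Y : Type*) : Perm Y →* Perm (X × Y) where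
  toFun k := (Equiv.refl X).prodCongr k
  map_one' := Equiv.ext fun p => rfl
  map_mul' := fun k1 k2 => Equiv.ext fun p => rfl

lemma lamHom_apply (X Y : Type*) (k : Perm Y) (x : X) (y : Y) :
    lamHom X Y k (x, y) = (x, k y) := rfl

/-- The base group `B` of the wreath product: all permutations of `Z = X × Y`
stabilizing each block `X_y` and restricting to an element of `H_y` on it. -/
def baseGroup (X Y : Type*) (H : Subgroup (Perm X)) : Subgroup (Perm (X × Y)) where
  carrier := {f | ∀ y : Y, ∃ h ∈ H, ∀ x : X, f (x, y) = (h x, y)}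
  one_mem' := fun y => ⟨1, H.one_mem, fun x => rfl⟩
  mul_mem' := by
    rintro f g hf hg y
    obtain ⟨hg', hgH, hgeq⟩ := hg y
    obtain ⟨hf', hfH, hfeq⟩ := hf y
    refine ⟨hf' * hg', H.mul_mem hfH hgH, fun x => ?_⟩
    have : (f * g) (x, y) = f (g (x, y)) := rfl
    rw [this, hgeq x, hfeq (hg' x)]
    rfl
  inv_mem' := by
    rintro f hf y
    obtain ⟨h, hH, heq⟩ := hf y
    refine ⟨h⁻¹, H.inv_mem hH, fun x => ?_⟩
    have h1 : f ((h⁻¹ : Perm X) x, y) = (x, y) := by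
      rw [heq]
      simp
    calc f⁻¹ (x, y) = f⁻¹ (f ((h⁻¹ : Perm X) x, y)) := by rw [h1]
      _ = ((h⁻¹ : Perm X) x, y) := by simp

lemma mem_baseGroup_iff (X Y : Type*) (H : Subgroup (Perm X)) (f : Perm (X × Y)) :
    f ∈ baseGroup X Y H ↔ ∀ y : Y, ∃ h ∈ H, ∀ x : X, f (x, y) = (h x, y) := Iff.rfl

lemma lam_conj_base (X Y : Type*) {H : Subgroup (Perm X)} (k : Perm Y) {b : Perm (X × Y)}
    (hb : b ∈ baseGroup X Y H) : (lamHom X Y k)⁻¹ * b * lamHom X Y k ∈ baseGroup X Y H := by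
  intro y
  obtain ⟨h, hH, heq⟩ := hb (k y)
  refine ⟨h, hH, fun x => ?_⟩
  have h2 : ((lamHom X Y k)⁻¹ : Perm (X × Y)) (h x, k y) = (h x, y) := by
    have h3 : (lamHom X Y k) (h x, y) = (h x, k y) := rfl
    rw [← h3]
    simp
  calc ((lamHom X Y k)⁻¹ * b * lamHom X Y k) (x, y)
      = (lamHom X Y k)⁻¹ (b ((lamHom X Y k) (x, y))) := rfl
    _ = (lamHom X Y k)⁻¹ (b (x, k y)) := rfl
    _ = (lamHom X Y k)⁻¹ (h x, k y) := by rw [heq x]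
    _ = (h x, y) := h2

/-- The unrestricted wreath product `W = H ≀ K ≤ Perm(X × Y)`, namely the
internal product `Λ(K)·B`. -/
def wreath (X Y : Type*) (H : Subgroup (Perm X)) (K : Subgroup (Perm Y)) :
    Subgroup (Perm (X × Y)) where
  carrier := {w | ∃ k ∈ K, ∃ b ∈ baseGroup X Y H, w = lamHom X Y k * b}
  one_mem' := ⟨1, K.one_mem, 1, (baseGroup X Y H).one_mem, by simp⟩
  mul_mem' := by
    rintro w1 w2 ⟨k1, hk1, b1, hb1, rfl⟩ ⟨k2, hk2, b2, hb2, rfl⟩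
    refine ⟨k1 * k2, K.mul_mem hk1 hk2, ((lamHom X Y k2)⁻¹ * b1 * lamHom X Y k2) * b2,
      (baseGroup X Y H).mul_mem (lam_conj_base X Y k2 hb1) hb2, ?_⟩
    rw [map_mul]
    group
  inv_mem' := by
    rintro w ⟨k, hk, b, hb, rfl⟩
    refine ⟨k⁻¹, K.inv_mem hk, (lamHom X Y k⁻¹)⁻¹ * b⁻¹ * lamHom X Y k⁻¹,
      lam_conj_base X Y k⁻¹ ((baseGroup X Y H).inv_mem hb), ?_⟩
    rw [map_inv]
    group

lemma mem_wreath_iff (X Y : Type*) (H : Subgroup (Perm X)) (K : Subgroup (Perm Y))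
    (w : Perm (X × Y)) :
    w ∈ wreath X Y H K ↔ ∃ k ∈ K, ∃ b ∈ baseGroup X Y H, w = lamHom X Y k * b := Iff.rfl

/-- The image of the (right) regular representation of a group `K` in `Perm K`. -/
def rightRegular (K : Type*) [Group K] : Subgroup (Perm K) where
  carrier := Set.range (fun k : K => Equiv.mulRight k)
  one_mem' := ⟨1, by ext x; simp⟩
  mul_mem' := by
    rintro _ _ ⟨a, rfl⟩ ⟨b, rfl⟩
    exact ⟨b * a, by ext x; simp [mul_assoc]⟩
  inv_mem' := by
    rintro _ ⟨a, rfl⟩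
    exact ⟨a⁻¹, by ext x; simp⟩

/-- The homomorphism `Γ : Aut(K) → Perm(X × K)`, `Γ(γ)(x,k) = (x, γ(k))`. -/
def gammaHom (X K : Type*) [Group K] : MulAut K →* Perm (X × K) where
  toFun γ := (Equiv.refl X).prodCongr γ.toEquiv
  map_one' := Equiv.ext fun p => rfl
  map_mul' := fun γ1 γ2 => Equiv.ext fun p => rfl

lemma gammaHom_apply (X K : Type*) [Group K] (γ : MulAut K) (x : X) (k : K) :
    gammaHom X K γ (x, k) = (x, γ k) := rfl

/-- The homomorphism `m ↦ m*` from `Perm X` to `Perm (X × K)`, `m*(x,k) = (m(x), k)`. -/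
def mstarHom (X K : Type*) : Perm X →* Perm (X × K) where
  toFun m := m.prodCongr (Equiv.refl K)
  map_one' := Equiv.ext fun p => rfl
  map_mul' := fun m1 m2 => Equiv.ext fun p => rfl

lemma mstarHom_apply (X K : Type*) (m : Perm X) (x : X) (k : K) :
    mstarHom X K m (x, k) = (m x, k) := rfl

section AuxF

variable {X : Type*} {K : Type*} [Group K] {H : Subgroup (Perm X)}

lemma base_snd {b : Perm (X × K)} (hb : b ∈ baseGroup X K H) (p : X × K) :
    (b p).2 = p.2 := by
  obtain ⟨h, _, heq⟩ := hb p.2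
  have h1 := heq p.1
  have h2 : ((p.1, p.2) : X × K) = p := rfl
  rw [h2] at h1
  rw [h1]

lemma fiber_mem_base {h : Perm X} (hh : h ∈ H) (y : K) :
    fiberPerm X K h y ∈ baseGroup X K H := by
  intro y'
  by_cases hy : y' = y
  · subst hy
    exact ⟨h, hh, fun x => fiberPerm_apply_eq X K h y' x⟩
  · exact ⟨1, H.one_mem, fun x => by
      rw [fiberPerm_apply_ne X K h y (x, y') hy]; rfl⟩

lemma base_le_wreath : baseGroup X K H ≤ wreath X K H (rightRegular K) := by
  intro b hb
  exact ⟨1, (rightRegular K).one_mem, b, hb, by rw [map_one, one_mul]⟩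

lemma lam_mem_wreath (k : K) :
    lamHom X K (Equiv.mulRight k) ∈ wreath X K H (rightRegular K) :=
  ⟨Equiv.mulRight k, ⟨k, rfl⟩, 1, (baseGroup X K H).one_mem, (mul_one _).symm⟩

/-- Because `K` acts regularly, any element of `W` fixing a point lies in `B`. -/
lemma stab_le_base {w : Perm (X × K)} (hw : w ∈ wreath X K H (rightRegular K))
    (p : X × K) (hp : w p = p) : w ∈ baseGroup X K H := by
  obtain ⟨κ, ⟨k, rfl⟩, b, hb, rfl⟩ := hw
  have h1 : (lamHom X K (Equiv.mulRight k) * b) p = (( b p).1, p.2 * k) := by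
    have h2 : (lamHom X K (Equiv.mulRight k) * b) p
        = lamHom X K (Equiv.mulRight k) (b p) := rfl
    rw [h2]
    have h3 : b p = ((b p).1, (b p).2) := rfl
    rw [h3, lamHom_apply, base_snd hb p]
    rfl
  rw [h1] at hp
  have h4 : p.2 * k = p.2 := congrArg Prod.snd hp
  have h5 : k = 1 := mul_left_cancel (a := p.2) (by rw [mul_one]; exact h4)
  subst h5
  have h6 : (Equiv.mulRight (1 : K)) = (1 : Perm K) := by ext z; simp
  show lamHom X K (Equiv.mulRight (1 : K)) * b ∈ baseGroup X K H
  rw [h6, map_one, one_mul]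
  exact hb

lemma conj_mem_wreath {α w : Perm (X × K)}
    (hα : α ∈ Subgroup.normalizer ((wreath X K H (rightRegular K) : Subgroup (Perm (X × K))) : Set (Perm (X × K))))
    (hw : w ∈ wreath X K H (rightRegular K)) :
    α * w * α⁻¹ ∈ wreath X K H (rightRegular K) :=
  (Subgroup.mem_normalizer_iff.mp hα w).mp hw

/-- For `X` nonempty and `K` nontrivial, conjugation by a normalizer element
preserves the base group (since `B` is generated by point stabilizers of `W`). -/
lemma conj_mem_base [Nonempty X] [Nontrivial K] {α b : Perm (X × K)}
    (hα : α ∈ Subgroup.normalizer ((wreath X K H (rightRegular K) : Subgroup (Perm (X × K))) : Set (Perm (X × K))))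
    (hb : b ∈ baseGroup X K H) : α * b * α⁻¹ ∈ baseGroup X K H := by
  obtain ⟨h, hH, heq⟩ := hb (1 : K)
  set x0 : X := Classical.arbitrary X
  obtain ⟨y1, hy1⟩ := exists_ne (1 : K)
  set F : Perm (X × K) := fiberPerm X K h 1 with hF
  have hFB : F ∈ baseGroup X K H := fiber_mem_base hH 1
  set b2 : Perm (X × K) := F⁻¹ * b with hb2
  have hb2B : b2 ∈ baseGroup X K H :=
    (baseGroup X K H).mul_mem ((baseGroup X K H).inv_mem hFB) hb
  -- F fixes (x0, y1)
  have hFfix : F (x0, y1) = (x0, y1) := fiberPerm_apply_ne X K h 1 (x0, y1) hy1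
  -- b2 fixes (x0, 1)
  have hb2fix : b2 (x0, 1) = (x0, 1) := by
    have h1 : b2 (x0, 1) = F⁻¹ (b (x0, 1)) := rfl
    have h2 : F (x0, 1) = (h x0, 1) := fiberPerm_apply_eq X K h 1 x0
    rw [h1, heq x0, ← h2]
    exact Equiv.symm_apply_apply F (x0, 1)
  have hconjF : α * F * α⁻¹ ∈ baseGroup X K H := by
    refine stab_le_base (conj_mem_wreath hα (base_le_wreath hFB)) (α (x0, y1)) ?_
    have : (α * F * α⁻¹) (α (x0, y1)) = α (F (x0, y1)) := by simp [Perm.mul_apply]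
    rw [this, hFfix]
  have hconjb2 : α * b2 * α⁻¹ ∈ baseGroup X K H := by
    refine stab_le_base (conj_mem_wreath hα (base_le_wreath hb2B)) (α (x0, 1)) ?_
    have : (α * b2 * α⁻¹) (α (x0, 1)) = α (b2 (x0, 1)) := by simp [Perm.mul_apply]
    rw [this, hb2fix]
  have hsplit : α * b * α⁻¹ = (α * F * α⁻¹) * (α * b2 * α⁻¹) := by
    rw [hb2]; group
  rw [hsplit]
  exact (baseGroup X K H).mul_mem hconjF hconjb2

lemma gamma_conj_base (γ : MulAut K) {b : Perm (X × K)} (hb : b ∈ baseGroup X K H) :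
    gammaHom X K γ * b * (gammaHom X K γ)⁻¹ ∈ baseGroup X K H := by
  intro y
  obtain ⟨h, hH, heq⟩ := hb (γ⁻¹ y)
  refine ⟨h, hH, fun x => ?_⟩
  have h1 : (gammaHom X K γ)⁻¹ (x, y) = (x, γ⁻¹ y) := by
    rw [← map_inv]; exact gammaHom_apply X K γ⁻¹ x y
  have h2 : (gammaHom X K γ * b * (gammaHom X K γ)⁻¹) (x, y)
      = gammaHom X K γ (b ((gammaHom X K γ)⁻¹ (x, y))) := rfl
  rw [h2, h1, heq x, gammaHom_apply]
  have h3 : γ (γ⁻¹ y) = y := by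
    have : γ * γ⁻¹ = 1 := mul_inv_cancel γ
    calc γ (γ⁻¹ y) = (γ * γ⁻¹) y := rfl
      _ = y := by rw [this]; rfl
  rw [h3]

lemma gamma_conj_lam (γ : MulAut K) (k : K) :
    gammaHom X K γ * lamHom X K (Equiv.mulRight k) * (gammaHom X K γ)⁻¹
      = lamHom X K (Equiv.mulRight (γ k)) := by
  refine Equiv.ext fun p => ?_
  obtain ⟨x, y⟩ := p
  have h1 : (gammaHom X K γ)⁻¹ (x, y) = (x, γ⁻¹ y) := by
    rw [← map_inv]; exact gammaHom_apply X K γ⁻¹ x y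
  have h2 : (gammaHom X K γ * lamHom X K (Equiv.mulRight k) * (gammaHom X K γ)⁻¹) (x, y)
      = gammaHom X K γ (lamHom X K (Equiv.mulRight k) ((gammaHom X K γ)⁻¹ (x, y))) := rfl
  rw [h2, h1, lamHom_apply, gammaHom_apply, lamHom_apply]
  have h3 : γ (γ⁻¹ y * k) = y * γ k := by
    rw [map_mul]
    congr 1
    have : γ * γ⁻¹ = 1 := mul_inv_cancel γ
    calc γ (γ⁻¹ y) = (γ * γ⁻¹) y := rfl
      _ = y := by rw [this]; rfl
  simp only [Equiv.coe_mulRight]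
  rw [h3]

lemma gamma_conj_wreath (γ : MulAut K) {w : Perm (X × K)}
    (hw : w ∈ wreath X K H (rightRegular K)) :
    gammaHom X K γ * w * (gammaHom X K γ)⁻¹ ∈ wreath X K H (rightRegular K) := by
  obtain ⟨κ, ⟨k, rfl⟩, b, hb, rfl⟩ := hw
  refine ⟨Equiv.mulRight (γ k), ⟨γ k, rfl⟩,
    gammaHom X K γ * b * (gammaHom X K γ)⁻¹, gamma_conj_base γ hb, ?_⟩
  rw [← gamma_conj_lam γ k]
  group

lemma gamma_mem_normalizer (γ : MulAut K) :
    gammaHom X K γ ∈ Subgroup.normalizer ((wreath X K H (rightRegular K) : Subgroup (Perm (X × K))) : Set (Perm (X × K))) := by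
  rw [Subgroup.mem_normalizer_iff]
  intro w
  constructor
  · exact fun hw => gamma_conj_wreath γ hw
  · intro hw
    have h1 := gamma_conj_wreath (H := H) γ⁻¹ hw
    have h2 : gammaHom X K γ⁻¹ * (gammaHom X K γ * w * (gammaHom X K γ)⁻¹) *
        (gammaHom X K γ⁻¹)⁻¹ = w := by
      rw [map_inv]
      group
    rwa [h2] at h1

lemma snd_eq_mem_blockStab {f : Perm (X × K)} (hf : ∀ p : X × K, (f p).2 = p.2) :
    f ∈ blockStab X K := by
  intro y
  ext q
  constructor
  · rintro ⟨p, hp, rfl⟩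
    have := hf p
    rw [hp] at this
    exact this
  · intro hq
    refine ⟨f⁻¹ q, ?_, Equiv.apply_symm_apply f q⟩
    have h1 := hf (f⁻¹ q)
    rw [show f (f⁻¹ q) = q from Equiv.apply_symm_apply f q] at h1
    show (f⁻¹ q).2 = y
    rw [← h1]
    exact hq

end AuxF

/-- **Lemma F.** With `Y = K` regular and `H ≤ Perm X` transitive, the normalizer `N` of
`W = H ≀ K` in `Perm Z` satisfies `N = (Γ(Aut K)·Λ(K))·(N ∩ S_K(Z))`. -/
theorem normalizer_eq_gamma_lam_blockStab {X : Type*} (K : Type*) [Group K]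
    (H : Subgroup (Perm X)) (hH : ∀ x x' : X, ∃ h ∈ H, h x = x') (α : Perm (X × K)) :
    α ∈ Subgroup.normalizer ((wreath X K H (rightRegular K) : Subgroup (Perm (X × K))) : Set (Perm (X × K))) ↔
      ∃ (γ : MulAut K) (k : K) (f : Perm (X × K)),
        f ∈ Subgroup.normalizer ((wreath X K H (rightRegular K) : Subgroup (Perm (X × K))) : Set (Perm (X × K))) ∧ f ∈ blockStab X K ∧
        α = gammaHom X K γ * lamHom X K (Equiv.mulRight k) * f := by
  constructor
  · intro hα
    -- Degenerate cases first.
    rcases isEmpty_or_nonempty X with hX | hX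
    · have hsub : Subsingleton (X × K) := ⟨fun p _ => (hX.false p.1).elim⟩
      have hα1 : α = 1 := by
        refine Equiv.ext fun p => ?_
        exact hsub.elim _ _
      refine ⟨1, 1, 1, (Subgroup.normalizer ((wreath X K H (rightRegular K) : Subgroup (Perm (X × K))) : Set (Perm (X × K)))).one_mem,
        (blockStab X K).one_mem, ?_⟩
      rw [hα1]
      have h6 : (Equiv.mulRight (1 : K)) = (1 : Perm K) := by ext z; simp
      rw [h6, map_one, map_one]
      simp
    rcases subsingleton_or_nontrivial K with hK | hK
    · refine ⟨1, 1, α, hα, ?_, ?_⟩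
      · intro y
        have hbl : block X K y = Set.univ := by
          ext p; simpa [block] using Subsingleton.elim p.2 y
        rw [hbl, Set.image_univ]
        exact Equiv.range_eq_univ α
      · have h6 : (Equiv.mulRight (1 : K)) = (1 : Perm K) := by ext z; simp
        rw [h6, map_one, map_one]
        simp
    -- Main case : `X` nonempty, `K` nontrivial.
    set W := wreath X K H (rightRegular K) with hW
    set x0 : X := Classical.arbitrary X with hx0
    set s : K → K := fun y => (α (x0, y)).2 with hs_def
    have hαinv : α⁻¹ ∈ Subgroup.normalizer (W : Set (Perm (X × K))) := (Subgroup.normalizer (W : Set (Perm (X × K)))).inv_mem hα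
    -- α maps blocks into blocks
    have key : ∀ (β : Perm (X × K)), β ∈ Subgroup.normalizer (W : Set (Perm (X × K))) →
        ∀ (x : X) (y : K), (β (x, y)).2 = (β (x0, y)).2 := by
      intro β hβ x y
      obtain ⟨h, hH', hh⟩ := hH x0 x
      have hbB : fiberPerm X K h y ∈ baseGroup X K H := fiber_mem_base hH' y
      have hcB : β * fiberPerm X K h y * β⁻¹ ∈ baseGroup X K H :=
        conj_mem_base hβ hbB
      have h1 : β (x, y) = (β * fiberPerm X K h y * β⁻¹) (β (x0, y)) := by
        have h2 : (β * fiberPerm X K h y * β⁻¹) (β (x0, y))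
            = β (fiberPerm X K h y (x0, y)) := by simp [Perm.mul_apply]
        rw [h2, fiberPerm_apply_eq, hh]
      rw [h1, base_snd hcB]
    have hs : ∀ (x : X) (y : K), (α (x, y)).2 = s y := fun x y => key α hα x y
    set s' : K → K := fun y => (α⁻¹ (x0, y)).2 with hs'_def
    have hs' : ∀ (x : X) (y : K), (α⁻¹ (x, y)).2 = s' y := fun x y => key α⁻¹ hαinv x y
    have hss' : ∀ y, s' (s y) = y := by
      intro y
      have h1 : α (x0, y) = ((α (x0, y)).1, s y) := by
        have := hs x0 y
        exact Prod.ext rfl this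
      have h2 : (α⁻¹ (α (x0, y))).2 = y := by rw [show α⁻¹ (α (x0, y)) = (x0, y) from Equiv.symm_apply_apply α (x0, y)]
      rw [h1] at h2
      calc s' (s y) = (α⁻¹ ((α (x0, y)).1, s y)).2 := (hs' _ _).symm
        _ = y := h2
    have hs's : ∀ y, s (s' y) = y := by
      intro y
      have h1 : α⁻¹ (x0, y) = ((α⁻¹ (x0, y)).1, s' y) := by
        have := hs' x0 y
        exact Prod.ext rfl this
      have h2 : (α (α⁻¹ (x0, y))).2 = y := by rw [show α (α⁻¹ (x0, y)) = (x0, y) from Equiv.apply_symm_apply α (x0, y)]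
      rw [h1] at h2
      calc s (s' y) = (α ((α⁻¹ (x0, y)).1, s' y)).2 := (hs _ _).symm
        _ = y := h2
    -- the cocycle identity
    have hkey : ∀ y k : K, s (y * k) = s y * ((s 1)⁻¹ * s k) := by
      intro y k
      obtain ⟨κ, ⟨c, hc⟩, b, hbB, hdecomp⟩ :=
        conj_mem_wreath hα (lam_mem_wreath (H := H) k)
      have main : ∀ z : K, s (z * k) = s z * c := by
        intro z
        have h1 : α (x0, z * k) =
            (α * lamHom X K (Equiv.mulRight k) * α⁻¹) (α (x0, z)) := by
          have h2 : (α * lamHom X K (Equiv.mulRight k) * α⁻¹) (α (x0, z))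
              = α (lamHom X K (Equiv.mulRight k) (x0, z)) := by simp [Perm.mul_apply]
          rw [h2, lamHom_apply]
          rfl
        rw [hdecomp, ← hc] at h1
        have h3 : (lamHom X K (Equiv.mulRight c) * b) (α (x0, z))
            = lamHom X K (Equiv.mulRight c) (b (α (x0, z))) := rfl
        have h4 : b (α (x0, z)) = ((b (α (x0, z))).1, s z) := by
          refine Prod.ext rfl ?_
          rw [base_snd hbB, hs x0 z]
        have h5 : (α (x0, z * k)).2 = s z * c := by
          rw [h1, h3, h4, lamHom_apply]
          rfl
        rw [← h5, hs x0 (z * k)]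
      have h6 : s k = s 1 * c := by
        have := main 1
        rwa [one_mul] at this
      rw [main y, h6]
      group
    -- build the automorphism γ
    set γ : MulAut K :=
      { toFun := fun y => s y * (s 1)⁻¹
        invFun := fun z => s' (z * s 1)
        left_inv := fun y => by
          simp only [inv_mul_cancel_right]
          exact hss' y
        right_inv := fun z => by
          simp only [hs's]
          exact mul_inv_cancel_right z (s 1)
        map_mul' := fun y1 y2 => by
          show s (y1 * y2) * (s 1)⁻¹ = s y1 * (s 1)⁻¹ * (s y2 * (s 1)⁻¹)
          rw [hkey y1 y2]
          group } with hγdef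
    have hγ_apply : ∀ y, γ y = s y * (s 1)⁻¹ := fun _ => rfl
    set k0 : K := γ.symm (s 1) with hk0
    have hγk0 : γ k0 = s 1 := γ.apply_symm_apply (s 1)
    have hγyk0 : ∀ y, γ (y * k0) = s y := by
      intro y
      rw [map_mul, hγk0, hγ_apply]
      group
    set f : Perm (X × K) :=
      (gammaHom X K γ * lamHom X K (Equiv.mulRight k0))⁻¹ * α with hf
    have hfsnd : ∀ p : X × K, (f p).2 = p.2 := by
      intro p
      obtain ⟨x, y⟩ := p
      have h1 : f (x, y) = (lamHom X K (Equiv.mulRight k0))⁻¹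
          ((gammaHom X K γ)⁻¹ (α (x, y))) := by
        rw [hf, mul_inv_rev]
        rfl
      have h2 : α (x, y) = ((α (x, y)).1, s y) := Prod.ext rfl (hs x y)
      have h3 : (gammaHom X K γ)⁻¹ ((α (x, y)).1, s y)
          = ((α (x, y)).1, γ⁻¹ (s y)) := by
        rw [← map_inv]; exact gammaHom_apply X K γ⁻¹ _ _
      have h4 : (γ⁻¹ : MulAut K) (s y) = y * k0 := by
        have : (γ⁻¹ : MulAut K) (s y) = γ.symm (s y) := rfl
        rw [this, MulEquiv.symm_apply_eq, hγyk0]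
      have h5 : (lamHom X K (Equiv.mulRight k0))⁻¹ = lamHom X K (Equiv.mulRight k0⁻¹) := by
        rw [← map_inv]
        congr 1
        ext z
        simp
      rw [h1, h2, h3, h4, h5, lamHom_apply]
      simp [Equiv.mulRight]
    have hΓN : gammaHom X K γ ∈ Subgroup.normalizer (W : Set (Perm (X × K))) := gamma_mem_normalizer γ
    have hΛN : lamHom X K (Equiv.mulRight k0) ∈ Subgroup.normalizer (W : Set (Perm (X × K))) :=
      Subgroup.le_normalizer (lam_mem_wreath k0)
    refine ⟨γ, k0, f, ?_, snd_eq_mem_blockStab hfsnd, ?_⟩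
    · exact (Subgroup.normalizer (W : Set (Perm (X × K)))).mul_mem
        ((Subgroup.normalizer (W : Set (Perm (X × K)))).inv_mem ((Subgroup.normalizer (W : Set (Perm (X × K)))).mul_mem hΓN hΛN)) hα
    · rw [hf]
      group
  · rintro ⟨γ, k, f, hfN, -, rfl⟩
    exact Subgroup.mul_mem _
      (Subgroup.mul_mem _ (gamma_mem_normalizer γ)
        (Subgroup.le_normalizer (lam_mem_wreath k))) hfN
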